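/- Let ψ, φ : (0,∞) → (0,∞) be twice differentiable with ψ', φ' > 0 and ψ'', φ'' ≤ 0 everywhere, and suppose -ψ''(ξ)/ψ'(ξ) ≤ -φ''(ξ)/φ'(ξ) for all ξ > 0. Then for all λ, ξ > 0 with ξ ≠ λ, λ²ψ'(λ²)/(ψ(ξ²) - ψ(λ²)) - λ²/(ξ² - λ²) ≤ λ²φ'(λ²)/(φ(ξ²) - φ(λ²)) - λ²/(ξ² - λ²). -/
import Mathlib


open Set

theorem doubly_regularized_comparison (ψ φ ψ' φ' ψ'' φ'' : ℝ → ℝ)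
    (hdψ : ∀ ξ ∈ Set.Ioi (0:ℝ), HasDerivAt ψ (ψ' ξ) ξ)
    (hdφ : ∀ ξ ∈ Set.Ioi (0:ℝ), HasDerivAt φ (φ' ξ) ξ)
    (hdψ' : ∀ ξ ∈ Set.Ioi (0:ℝ), HasDerivAt ψ' (ψ'' ξ) ξ)
    (hdφ' : ∀ ξ ∈ Set.Ioi (0:ℝ), HasDerivAt φ' (φ'' ξ) ξ)
    (hψpos : ∀ ξ ∈ Set.Ioi (0:ℝ), 0 < ψ ξ)
    (hφpos : ∀ ξ ∈ Set.Ioi (0:ℝ), 0 < φ ξ)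
    (hψ'pos : ∀ ξ ∈ Set.Ioi (0:ℝ), 0 < ψ' ξ)
    (hφ'pos : ∀ ξ ∈ Set.Ioi (0:ℝ), 0 < φ' ξ)
    (hψ'' : ∀ ξ ∈ Set.Ioi (0:ℝ), ψ'' ξ ≤ 0)
    (hφ'' : ∀ ξ ∈ Set.Ioi (0:ℝ), φ'' ξ ≤ 0)
    (hcomp : ∀ ξ ∈ Set.Ioi (0:ℝ), -ψ'' ξ / ψ' ξ ≤ -φ'' ξ / φ' ξ) :
    ∀ l ξ : ℝ, 0 < l → 0 < ξ → ξ ≠ l →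
      l ^ 2 * ψ' (l ^ 2) / (ψ (ξ ^ 2) - ψ (l ^ 2)) - l ^ 2 / (ξ ^ 2 - l ^ 2) ≤
        l ^ 2 * φ' (l ^ 2) / (φ (ξ ^ 2) - φ (l ^ 2)) - l ^ 2 / (ξ ^ 2 - l ^ 2) := by
  -- Step 1: the ratio ψ'/φ' is monotone on (0,∞)
  have hmonoRatio : MonotoneOn (fun t => ψ' t / φ' t) (Set.Ioi (0:ℝ)) := by
    apply monotoneOn_of_hasDerivWithinAt_nonneg (convex_Ioi 0)
      (f' := fun t => (ψ'' t * φ' t - ψ' t * φ'' t) / (φ' t) ^ 2)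
    · intro t ht
      exact (((hdψ' t ht).continuousAt.div (hdφ' t ht).continuousAt
        (ne_of_gt (hφ'pos t ht)))).continuousWithinAt
    · intro t ht
      rw [interior_Ioi] at ht
      exact (((hdψ' t ht).div (hdφ' t ht) (ne_of_gt (hφ'pos t ht)))).hasDerivWithinAt
    · intro t ht
      rw [interior_Ioi] at ht
      have h1 := hcomp t ht
      have h2 := hψ'pos t ht
      have h3 := hφ'pos t ht
      have h4 : -ψ'' t * φ' t ≤ -φ'' t * ψ' t := by
        rw [div_le_div_iff₀ h2 h3] at h1
        linarith
      apply div_nonneg _ (sq_nonneg _)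
      nlinarith
  -- cross-multiplied form
  have hratio : ∀ x ∈ Set.Ioi (0:ℝ), ∀ y ∈ Set.Ioi (0:ℝ), x ≤ y →
      ψ' x * φ' y ≤ φ' x * ψ' y := by
    intro x hx y hy hxy
    have := hmonoRatio hx hy hxy
    rw [div_le_div_iff₀ (hφ'pos x hx) (hφ'pos y hy)] at this
    linarith
  intro l ξ hl hξ hne
  set a := l ^ 2 with ha_def
  set b := ξ ^ 2 with hb_def
  have ha : (0:ℝ) < a := by positivity
  have hb : (0:ℝ) < b := by positivity
  have hab : b ≠ a := by
    intro h
    exact hne (by nlinarith [sq_nonneg (ξ - l), sq_nonneg (ξ + l)])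
  -- Step 2: key inequality F a ≤ F b where F t = φ' a * ψ t - ψ' a * φ t
  have Fkey : φ' a * ψ a - ψ' a * φ a ≤ φ' a * ψ b - ψ' a * φ b := by
    rcases le_or_gt a b with hba | hba
    · have hmono : MonotoneOn (fun t => φ' a * ψ t - ψ' a * φ t) (Set.Ici a) := by
        apply monotoneOn_of_hasDerivWithinAt_nonneg (convex_Ici a)
          (f' := fun t => φ' a * ψ' t - ψ' a * φ' t)
        · intro t ht
          have ht' : t ∈ Set.Ioi (0:ℝ) := lt_of_lt_of_le ha ht
          exact ContinuousAt.continuousWithinAt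
            (((hdψ t ht').continuousAt.const_mul (φ' a)).sub
            ((hdφ t ht').continuousAt.const_mul (ψ' a)))
        · intro t ht
          rw [interior_Ici] at ht
          have ht' : t ∈ Set.Ioi (0:ℝ) := lt_trans ha ht
          exact (((hdψ t ht').const_mul _).sub ((hdφ t ht').const_mul _)).hasDerivWithinAt
        · intro t ht
          rw [interior_Ici] at ht
          have ht' : t ∈ Set.Ioi (0:ℝ) := lt_trans ha ht
          have := hratio a ha t ht' (le_of_lt ht)
          linarith
      exact hmono Set.self_mem_Ici hba hba
    · have hanti : AntitoneOn (fun t => φ' a * ψ t - ψ' a * φ t) (Set.Ioc 0 a) := by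
        apply antitoneOn_of_hasDerivWithinAt_nonpos (convex_Ioc 0 a)
          (f' := fun t => φ' a * ψ' t - ψ' a * φ' t)
        · intro t ht
          have ht' : t ∈ Set.Ioi (0:ℝ) := ht.1
          exact ContinuousAt.continuousWithinAt
            (((hdψ t ht').continuousAt.const_mul (φ' a)).sub
            ((hdφ t ht').continuousAt.const_mul (ψ' a)))
        · intro t ht
          rw [interior_Ioc] at ht
          have ht' : t ∈ Set.Ioi (0:ℝ) := ht.1
          exact (((hdψ t ht').const_mul _).sub ((hdφ t ht').const_mul _)).hasDerivWithinAt
        · intro t ht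
          rw [interior_Ioc] at ht
          have ht' : t ∈ Set.Ioi (0:ℝ) := ht.1
          have := hratio t ht' a ha (le_of_lt ht.2)
          linarith
      exact hanti ⟨hb, le_of_lt hba⟩ ⟨ha, le_refl a⟩ (le_of_lt hba)
  -- Strict monotonicity of ψ and φ on (0,∞)
  have hψmono : StrictMonoOn ψ (Set.Ioi (0:ℝ)) := by
    apply strictMonoOn_of_hasDerivWithinAt_pos (convex_Ioi 0) (f' := ψ')
    · exact fun t ht => (hdψ t ht).continuousAt.continuousWithinAt
    · intro t ht; rw [interior_Ioi] at ht; exact (hdψ t ht).hasDerivWithinAt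
    · intro t ht; rw [interior_Ioi] at ht; exact hψ'pos t ht
  have hφmono : StrictMonoOn φ (Set.Ioi (0:ℝ)) := by
    apply strictMonoOn_of_hasDerivWithinAt_pos (convex_Ioi 0) (f' := φ')
    · exact fun t ht => (hdφ t ht).continuousAt.continuousWithinAt
    · intro t ht; rw [interior_Ioi] at ht; exact (hdφ t ht).hasDerivWithinAt
    · intro t ht; rw [interior_Ioi] at ht; exact hφ'pos t ht
  have hψ'a := hψ'pos a ha
  have hφ'a := hφ'pos a ha
  have hl2 : (0:ℝ) ≤ l ^ 2 := sq_nonneg l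
  apply sub_le_sub_right
  rcases lt_or_gt_of_ne hab with hba | hba
  · -- b < a : denominators negative
    have hψd : 0 < ψ a - ψ b := sub_pos.mpr (hψmono hb ha hba)
    have hφd : 0 < φ a - φ b := sub_pos.mpr (hφmono hb ha hba)
    have e1 : ψ b - ψ a = -(ψ a - ψ b) := by ring
    have e2 : φ b - φ a = -(φ a - φ b) := by ring
    rw [e1, e2, div_neg, div_neg, neg_le_neg_iff, div_le_div_iff₀ hφd hψd]
    nlinarith [mul_le_mul_of_nonneg_left Fkey hl2]
  · -- a < b : denominators positive
    have hψd : 0 < ψ b - ψ a := sub_pos.mpr (hψmono ha hb hba)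
    have hφd : 0 < φ b - φ a := sub_pos.mpr (hφmono ha hb hba)
    rw [div_le_div_iff₀ hψd hφd]
    nlinarith [mul_le_mul_of_nonneg_left Fkey hl2]
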